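/- For k ≥ 3, let x_1 ≥ ... ≥ x_k ≥ 0 be reals with x_1 + ... + x_k ≤ 1 maximizing f(x_1,...,x_k) = Σ_i (x_i²/2 - x_i³/2) + Σ_{i<j} (x_i x_j + x_i x_j²/2 - 3x_i² x_j/2 - 2x_j³/3) subject to these constraints and x_1 ≤ 1/2. If i < k is an index with x_1 = ... = x_i > x_{i+1}, then the directional derivative of f at (x_1,...,x_k) in the direction -e_i + e_{i+1} equals (x_i - x_{i+1})((i-1)x_i + 2(i+1)x_{i+1} + 3Σ_{j=i+2}^k x_j) and is strictly positive whenever x_{i+1} > 0 or i ≥ 2; consequently any maximizer has x_1 = ... = x_k. -/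

import Mathlib

/-- The continuous analogue of the distance-unbalancedness of a subdivided star. -/
noncomputable def F {k : ℕ} (x : Fin k → ℝ) : ℝ :=
  (∑ i : Fin k, (x i ^ 2 / 2 - x i ^ 3 / 2))
    + ∑ i : Fin k, ∑ j ∈ Finset.Ioi i,
        (x i * x j + x i * x j ^ 2 / 2 - 3 * x i ^ 2 * x j / 2 - 2 * x j ^ 3 / 3)

open Finset Filter Topology


lemma sum_Ioi_comm' {M : Type*} [AddCommMonoid M] {k : ℕ} (f : Fin k → Fin k → M) :
    ∑ i, ∑ j ∈ Ioi i, f i j = ∑ j, ∑ i ∈ Iio j, f i j := by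
  have h1 : ∀ i : Fin k, ∑ j ∈ Ioi i, f i j = ∑ j, if i < j then f i j else 0 := by
    intro i; rw [← Finset.sum_filter]; congr 1; ext j; simp [Finset.mem_Ioi]
  have h2 : ∀ j : Fin k, ∑ i ∈ Iio j, f i j = ∑ i, if i < j then f i j else 0 := by
    intro j; rw [← Finset.sum_filter]; congr 1; ext i; simp [Finset.mem_Iio]
  simp only [h1, h2]
  exact Finset.sum_comm

lemma upd_apply {k : ℕ} (x : Fin k → ℝ) (m0 m1 : Fin k) (hne : m0 ≠ m1) (ε : ℝ) (i : Fin k) :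
    Function.update (Function.update x m0 (x m0 - ε)) m1 (x m1 + ε) i
      = if i = m1 then x m1 + ε else if i = m0 then x m0 - ε else x i := by
  rcases eq_or_ne i m1 with h1 | h1
  · subst h1; simp
  · rcases eq_or_ne i m0 with h2 | h2
    · subst h2; simp [Function.update_apply, hne, h1]
    · simp [Function.update_apply, h1, h2]

lemma sum_ite_two {k : ℕ} (m0 m1 : Fin k) (hne : m0 ≠ m1) (u v : ℝ) :
    ∑ i : Fin k, (if i = m1 then u else if i = m0 then v else 0) = u + v := by
  have h : ∀ i : Fin k, (if i = m1 then u else if i = m0 then v else 0)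
      = (if i = m1 then u else 0) + (if i = m0 then v else 0) := by
    intro i
    rcases eq_or_ne i m1 with h1 | h1
    · subst h1; simp [hne.symm]
    · rcases eq_or_ne i m0 with h2 | h2
      · subst h2; simp [h1]
      · simp [h1, h2]
  rw [Finset.sum_congr rfl (fun i _ => h i), Finset.sum_add_distrib,
    Fintype.sum_ite_eq' m1 (fun _ => u), Fintype.sum_ite_eq' m0 (fun _ => v)]

lemma hasDerivAt_messy {k : ℕ} (x : Fin k → ℝ) (m : ℕ) (hm : m + 1 < k) :
    HasDerivAt
      (fun ε : ℝ => F (Function.update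
        (Function.update x (⟨m, Nat.lt_of_succ_lt hm⟩ : Fin k) (x ⟨m, Nat.lt_of_succ_lt hm⟩ - ε))
        (⟨m + 1, hm⟩ : Fin k) (x ⟨m + 1, hm⟩ + ε)))
      ((∑ i : Fin k, (if i = (⟨m+1,hm⟩ : Fin k) then (1:ℝ) else if i = ⟨m, Nat.lt_of_succ_lt hm⟩ then -1 else 0) * (x i - 3/2 * x i ^ 2))
        + ∑ i : Fin k, ∑ j ∈ Finset.Ioi i,
            ((if i = (⟨m+1,hm⟩ : Fin k) then (1:ℝ) else if i = ⟨m, Nat.lt_of_succ_lt hm⟩ then -1 else 0) * (x j + x j ^ 2 / 2 - 3 * x i * x j)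
              + (if j = (⟨m+1,hm⟩ : Fin k) then (1:ℝ) else if j = ⟨m, Nat.lt_of_succ_lt hm⟩ then -1 else 0) * (x i + x i * x j - 3/2 * x i ^ 2 - 2 * x j ^ 2))) 0 := by
  set m0 : Fin k := ⟨m, Nat.lt_of_succ_lt hm⟩ with hm0
  set m1 : Fin k := ⟨m+1, hm⟩ with hm1
  have hne : m0 ≠ m1 := by simp [hm0, hm1, Fin.ext_iff]
  set δ : Fin k → ℝ := fun i => if i = m1 then (1:ℝ) else if i = m0 then -1 else 0 with hδ
  have hupd : ∀ (ε : ℝ) (i : Fin k),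
      Function.update (Function.update x m0 (x m0 - ε)) m1 (x m1 + ε) i = x i + δ i * ε := by
    intro ε i
    rw [upd_apply x m0 m1 hne]
    rcases eq_or_ne i m1 with h1 | h1
    · subst h1; simp [δ, hne.symm]; try ring
    · rcases eq_or_ne i m0 with h2 | h2
      · subst h2; simp [h1, δ]; try ring
      · simp [h1, h2, δ]
  have hu : ∀ i : Fin k, HasDerivAt (fun ε : ℝ => x i + δ i * ε) (δ i) 0 := by
    intro i
    simpa using ((hasDerivAt_id (0:ℝ)).const_mul (δ i)).const_add (x i)
  have hF : (fun ε : ℝ => F (Function.update (Function.update x m0 (x m0 - ε)) m1 (x m1 + ε)))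
      = fun ε : ℝ => (∑ i : Fin k, ((x i + δ i * ε) ^ 2 / 2 - (x i + δ i * ε) ^ 3 / 2))
        + ∑ i : Fin k, ∑ j ∈ Finset.Ioi i,
            ((x i + δ i * ε) * (x j + δ j * ε) + (x i + δ i * ε) * (x j + δ j * ε) ^ 2 / 2
              - 3 * (x i + δ i * ε) ^ 2 * (x j + δ j * ε) / 2 - 2 * (x j + δ j * ε) ^ 3 / 3) := by
    funext ε
    simp only [F, hupd]
  rw [hF]
  apply HasDerivAt.add
  · apply HasDerivAt.fun_sum
    intro i _
    have h := (((hu i).fun_pow 2).div_const 2).fun_sub (((hu i).fun_pow 3).div_const 2)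
    convert h using 1
    push_cast
    ring
  · apply HasDerivAt.fun_sum
    intro i _
    apply HasDerivAt.fun_sum
    intro j _
    have h := ((((hu i).fun_mul (hu j)).fun_add (((hu i).fun_mul ((hu j).fun_pow 2)).div_const 2)).fun_sub
        (((((hu i).fun_pow 2).const_mul 3).fun_mul (hu j)).div_const 2)).fun_sub
        ((((hu j).fun_pow 3).const_mul 2).div_const 3)
    convert h using 1
    push_cast
    ring

lemma deriv_identity {k : ℕ} (x : Fin k → ℝ) (m : ℕ) (hm : m + 1 < k)
    (hconst : ∀ j : Fin k, j ≤ ⟨m, Nat.lt_of_succ_lt hm⟩ → x j = x ⟨m, Nat.lt_of_succ_lt hm⟩) :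
    ((∑ i : Fin k, (if i = (⟨m+1,hm⟩ : Fin k) then (1:ℝ) else if i = ⟨m, Nat.lt_of_succ_lt hm⟩ then -1 else 0) * (x i - 3/2 * x i ^ 2))
        + ∑ i : Fin k, ∑ j ∈ Finset.Ioi i,
            ((if i = (⟨m+1,hm⟩ : Fin k) then (1:ℝ) else if i = ⟨m, Nat.lt_of_succ_lt hm⟩ then -1 else 0) * (x j + x j ^ 2 / 2 - 3 * x i * x j)
              + (if j = (⟨m+1,hm⟩ : Fin k) then (1:ℝ) else if j = ⟨m, Nat.lt_of_succ_lt hm⟩ then -1 else 0) * (x i + x i * x j - 3/2 * x i ^ 2 - 2 * x j ^ 2)))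
    = (x ⟨m, Nat.lt_of_succ_lt hm⟩ - x ⟨m + 1, hm⟩)
        * ((m : ℝ) * x ⟨m, Nat.lt_of_succ_lt hm⟩ + 2 * ((m : ℝ) + 2) * x ⟨m + 1, hm⟩
          + 3 * ∑ j ∈ Finset.Ioi (⟨m + 1, hm⟩ : Fin k), x j) := by
  have hIoi : Ioi (⟨m, by omega⟩ : Fin k) = insert (⟨m+1, hm⟩ : Fin k) (Ioi ⟨m+1, hm⟩) := by
    ext j; simp only [Finset.mem_Ioi, Finset.mem_insert, Fin.lt_def, Fin.ext_iff, Fin.val_mk]; omega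
  have hIio : Iio (⟨m+1, hm⟩ : Fin k) = insert (⟨m, by omega⟩ : Fin k) (Iio ⟨m, by omega⟩) := by
    ext j; simp only [Finset.mem_Iio, Finset.mem_insert, Fin.lt_def, Fin.ext_iff, Fin.val_mk]; omega
  set m0 : Fin k := ⟨m, by omega⟩ with hm0
  set m1 : Fin k := ⟨m+1, hm⟩ with hm1
  have hne : m0 ≠ m1 := by simp [hm0, hm1, Fin.ext_iff]
  set δ : Fin k → ℝ := fun i => if i = m1 then (1:ℝ) else if i = m0 then -1 else 0 with hδ
  have hδsum : ∀ g : Fin k → ℝ, ∑ i, δ i * g i = g m1 - g m0 := by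
    intro g
    have h : ∀ i : Fin k, δ i * g i
        = (if i = m1 then g m1 else 0) + (if i = m0 then -(g m0) else 0) := by
      intro i
      rcases eq_or_ne i m1 with h1 | h1
      · subst h1; simp [δ, hne.symm]
      · rcases eq_or_ne i m0 with h2 | h2
        · subst h2; simp [δ, h1]
        · simp [δ, h1, h2]
    rw [Finset.sum_congr rfl (fun i _ => h i), Finset.sum_add_distrib,
      Fintype.sum_ite_eq' m1 (fun _ => g m1), Fintype.sum_ite_eq' m0 (fun _ => -(g m0))]
    ring
  have hm1notmem : m1 ∉ Ioi m1 := by simp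
  have hm0notmem : m0 ∉ Iio m0 := by simp
  have hcard : (Iio m0).card = m := by rw [Fin.card_Iio]
  have hxconst : ∀ i ∈ Iio m0, x i = x m0 := fun i hi => hconst i (le_of_lt (Finset.mem_Iio.mp hi))
  have h1 : (∑ i : Fin k, δ i * (x i - 3/2 * x i ^ 2))
      = (x m1 - 3/2 * x m1 ^ 2) - (x m0 - 3/2 * x m0 ^ 2) :=
    hδsum (fun i => x i - 3/2 * x i ^ 2)
  have h2 : (∑ i : Fin k, ∑ j ∈ Finset.Ioi i,
        (δ i * (x j + x j ^ 2 / 2 - 3 * x i * x j)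
          + δ j * (x i + x i * x j - 3/2 * x i ^ 2 - 2 * x j ^ 2)))
      = (∑ i : Fin k, δ i * ∑ j ∈ Finset.Ioi i, (x j + x j ^ 2 / 2 - 3 * x i * x j))
        + ∑ j : Fin k, δ j * ∑ i ∈ Finset.Iio j, (x i + x i * x j - 3/2 * x i ^ 2 - 2 * x j ^ 2) := by
    have e : (∑ i : Fin k, ∑ j ∈ Finset.Ioi i,
          (δ i * (x j + x j ^ 2 / 2 - 3 * x i * x j)
            + δ j * (x i + x i * x j - 3/2 * x i ^ 2 - 2 * x j ^ 2)))
        = (∑ i : Fin k, ∑ j ∈ Finset.Ioi i, δ i * (x j + x j ^ 2 / 2 - 3 * x i * x j))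
          + ∑ i : Fin k, ∑ j ∈ Finset.Ioi i, δ j * (x i + x i * x j - 3/2 * x i ^ 2 - 2 * x j ^ 2) := by
      rw [← Finset.sum_add_distrib]
      exact Finset.sum_congr rfl fun i _ => by rw [← Finset.sum_add_distrib]
    rw [e, sum_Ioi_comm' (fun i j => δ j * (x i + x i * x j - 3/2 * x i ^ 2 - 2 * x j ^ 2))]
    congr 1
    · exact Finset.sum_congr rfl fun i _ => (Finset.mul_sum _ _ _).symm
    · exact Finset.sum_congr rfl fun j _ => (Finset.mul_sum _ _ _).symm
  have h3 : (∑ i : Fin k, δ i * ∑ j ∈ Finset.Ioi i, (x j + x j ^ 2 / 2 - 3 * x i * x j))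
      = -(x m1 + x m1 ^2/2 - 3 * x m0 * x m1)
        + 3 * (x m0 - x m1) * ∑ j ∈ Ioi m1, x j := by
    rw [hδsum (fun i => ∑ j ∈ Finset.Ioi i, (x j + x j ^ 2 / 2 - 3 * x i * x j))]
    simp only [hIoi]
    rw [Finset.sum_insert hm1notmem, sub_add_eq_sub_sub_swap]
    have : ∑ j ∈ Ioi m1, (x j + x j ^ 2 / 2 - 3 * x m1 * x j)
        - (∑ j ∈ Ioi m1, (x j + x j ^ 2 / 2 - 3 * x m0 * x j))
        = ∑ j ∈ Ioi m1, (3 * (x m0 - x m1) * x j) := by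
      rw [← Finset.sum_sub_distrib]
      exact Finset.sum_congr rfl fun j _ => by ring
    rw [this, ← Finset.mul_sum]
    ring
  have h4 : (∑ j : Fin k, δ j * ∑ i ∈ Finset.Iio j, (x i + x i * x j - 3/2 * x i ^ 2 - 2 * x j ^ 2))
      = (x m0 + x m0 * x m1 - 3/2 * x m0 ^2 - 2 * x m1 ^2)
        + m * ((x m0 + x m0 * x m1 - 3/2 * x m0 ^2 - 2 * x m1 ^2)
          - (x m0 + x m0 * x m0 - 3/2 * x m0 ^2 - 2 * x m0 ^2)) := by
    rw [hδsum (fun j => ∑ i ∈ Finset.Iio j, (x i + x i * x j - 3/2 * x i ^ 2 - 2 * x j ^ 2))]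
    rw [hIio, Finset.sum_insert hm0notmem]
    have e1 : ∑ i ∈ Iio m0, (x i + x i * x m1 - 3/2 * x i ^ 2 - 2 * x m1 ^ 2)
        = m * (x m0 + x m0 * x m1 - 3/2 * x m0 ^2 - 2 * x m1 ^2) := by
      rw [Finset.sum_congr rfl (fun i hi => by rw [hxconst i hi]), Finset.sum_const, hcard,
        nsmul_eq_mul]
    have e2 : ∑ i ∈ Iio m0, (x i + x i * x m0 - 3/2 * x i ^ 2 - 2 * x m0 ^ 2)
        = m * (x m0 + x m0 * x m0 - 3/2 * x m0 ^2 - 2 * x m0 ^2) := by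
      rw [Finset.sum_congr rfl (fun i hi => by rw [hxconst i hi]), Finset.sum_const, hcard,
        nsmul_eq_mul]
    rw [e1, e2]
    ring
  rw [h1, h2, h3, h4]
  ring


set_option maxHeartbeats 1000000 in
theorem maximizer_directional_derivative {k : ℕ} (hk : 3 ≤ k) (x : Fin k → ℝ)
    (hsort : Antitone x) (hpos : ∀ i, 0 ≤ x i) (hsum : ∑ i, x i ≤ 1)
    (hhalf : x ⟨0, by omega⟩ ≤ 1 / 2)
    (hmax : ∀ y : Fin k → ℝ, Antitone y → (∀ i, 0 ≤ y i) → (∑ i, y i) ≤ 1 →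
      y ⟨0, by omega⟩ ≤ 1 / 2 → F y ≤ F x) :
    (∀ m : ℕ, ∀ hm : m + 1 < k,
      (∀ j : Fin k, j ≤ ⟨m, by omega⟩ → x j = x ⟨m, by omega⟩) →
      x ⟨m + 1, hm⟩ < x ⟨m, by omega⟩ →
        HasDerivAt
          (fun ε : ℝ => F (Function.update
            (Function.update x (⟨m, by omega⟩ : Fin k) (x ⟨m, by omega⟩ - ε))
            (⟨m + 1, hm⟩ : Fin k) (x ⟨m + 1, hm⟩ + ε)))
          ((x ⟨m, by omega⟩ - x ⟨m + 1, hm⟩)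
            * ((m : ℝ) * x ⟨m, by omega⟩ + 2 * ((m : ℝ) + 2) * x ⟨m + 1, hm⟩
              + 3 * ∑ j ∈ Finset.Ioi (⟨m + 1, hm⟩ : Fin k), x j)) 0
        ∧ ((0 < x ⟨m + 1, hm⟩ ∨ 1 ≤ m) →
            0 < (x ⟨m, by omega⟩ - x ⟨m + 1, hm⟩)
              * ((m : ℝ) * x ⟨m, by omega⟩ + 2 * ((m : ℝ) + 2) * x ⟨m + 1, hm⟩
                + 3 * ∑ j ∈ Finset.Ioi (⟨m + 1, hm⟩ : Fin k), x j)))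
    ∧ ∀ i j : Fin k, x i = x j := by
  have part1 : ∀ m : ℕ, ∀ hm : m + 1 < k,
      (∀ j : Fin k, j ≤ ⟨m, by omega⟩ → x j = x ⟨m, by omega⟩) →
      x ⟨m + 1, hm⟩ < x ⟨m, by omega⟩ →
        HasDerivAt
          (fun ε : ℝ => F (Function.update
            (Function.update x (⟨m, by omega⟩ : Fin k) (x ⟨m, by omega⟩ - ε))
            (⟨m + 1, hm⟩ : Fin k) (x ⟨m + 1, hm⟩ + ε)))
          ((x ⟨m, by omega⟩ - x ⟨m + 1, hm⟩)
            * ((m : ℝ) * x ⟨m, by omega⟩ + 2 * ((m : ℝ) + 2) * x ⟨m + 1, hm⟩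
              + 3 * ∑ j ∈ Finset.Ioi (⟨m + 1, hm⟩ : Fin k), x j)) 0
        ∧ ((0 < x ⟨m + 1, hm⟩ ∨ 1 ≤ m) →
            0 < (x ⟨m, by omega⟩ - x ⟨m + 1, hm⟩)
              * ((m : ℝ) * x ⟨m, by omega⟩ + 2 * ((m : ℝ) + 2) * x ⟨m + 1, hm⟩
                + 3 * ∑ j ∈ Finset.Ioi (⟨m + 1, hm⟩ : Fin k), x j)) := by
    intro m hm hconst hdrop
    constructor
    · exact deriv_identity x m hm hconst ▸ hasDerivAt_messy x m hm
    · intro hcase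
      have hS : 0 ≤ ∑ j ∈ Finset.Ioi (⟨m + 1, hm⟩ : Fin k), x j :=
        Finset.sum_nonneg fun j _ => hpos j
      have hb : 0 ≤ x ⟨m + 1, hm⟩ := hpos _
      have ha : 0 ≤ x ⟨m, by omega⟩ := hpos _
      have hmn : (0:ℝ) ≤ (m:ℝ) := Nat.cast_nonneg m
      apply mul_pos (by linarith)
      rcases hcase with hc | hc
      · have h2 : 0 < 2 * ((m:ℝ) + 2) * x ⟨m + 1, hm⟩ := by positivity
        nlinarith
      · have h1 : (1:ℝ) ≤ (m:ℝ) := by exact_mod_cast hc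
        nlinarith
  refine ⟨part1, ?_⟩
  by_contra hne
  push_neg at hne
  have hex : ∃ n : ℕ, ∃ h : n + 1 < k, x ⟨n + 1, h⟩ < x ⟨n, by omega⟩ := by
    by_contra hno
    push_neg at hno
    have key : ∀ (n : ℕ) (hn : n < k), x ⟨0, by omega⟩ ≤ x ⟨n, hn⟩ := by
      intro n
      induction n with
      | zero => intro hn; exact le_rfl
      | succ n ih => intro hn; exact le_trans (ih (by omega)) (hno n hn)
    obtain ⟨i, j, hij⟩ := hne
    have hx0 : ∀ i : Fin k, x i = x ⟨0, by omega⟩ := by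
      intro i
      refine le_antisymm (hsort ?_) ?_
      · exact Fin.le_def.mpr (by simp)
      · have := key i.val i.isLt
        simpa using this
    exact hij ((hx0 i).trans (hx0 j).symm)
  obtain ⟨m, ⟨hm, hdrop⟩, hmin'⟩ :
      ∃ m : ℕ, (∃ h : m + 1 < k, x ⟨m + 1, h⟩ < x ⟨m, by omega⟩)
        ∧ ∀ n, n < m → ¬ ∃ h : n + 1 < k, x ⟨n + 1, h⟩ < x ⟨n, by omega⟩ :=
    ⟨Nat.find hex, Nat.find_spec hex, fun n hn => Nat.find_min hex hn⟩
  have hmin : ∀ n, n < m → ∀ h : n + 1 < k, ¬ x ⟨n + 1, h⟩ < x ⟨n, by omega⟩ := by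
    intro n hn h
    have := hmin' n hn
    push_neg at this
    exact not_lt.mpr (this h)
  have adj : ∀ (n : ℕ) (hn : n < m), x ⟨n, by omega⟩ = x ⟨n + 1, by omega⟩ := by
    intro n hn
    have h1 : n + 1 < k := by omega
    refine le_antisymm ?_ (hsort (by simp [Fin.le_def]))
    exact not_lt.mp (hmin n hn h1)
  have chain : ∀ (d n : ℕ) (h : n + d ≤ m), x ⟨n, by omega⟩ ≤ x ⟨n + d, by omega⟩ := by
    intro d
    induction d with
    | zero => intro n h; exact le_rfl
    | succ d ih =>
      intro n h
      calc x ⟨n, by omega⟩ ≤ x ⟨n + d, by omega⟩ := ih n (by omega)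
        _ = x ⟨n + d + 1, by omega⟩ := adj (n + d) (by omega)
  have hconst : ∀ j : Fin k, j ≤ ⟨m, by omega⟩ → x j = x ⟨m, by omega⟩ := by
    intro j hj
    have hjv : (j : ℕ) ≤ m := hj
    refine le_antisymm ?_ (hsort hj)
    have h5 := chain (m - j.val) j.val (by omega)
    have heq : (⟨j.val + (m - j.val), by omega⟩ : Fin k) = ⟨m, by omega⟩ :=
      Fin.ext (by simp; omega)
    rw [heq] at h5
    simpa using h5
  obtain ⟨hder, hposD⟩ := part1 m hm hconst hdrop
  set m0 : Fin k := ⟨m, by omega⟩ with hm0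
  set m1 : Fin k := ⟨m + 1, hm⟩ with hm1
  have hnem : m0 ≠ m1 := by simp [hm0, hm1, Fin.ext_iff]
  have hm0v : (m0 : ℕ) = m := rfl
  have hm1v : (m1 : ℕ) = m + 1 := rfl
  by_cases hcase : 0 < x m1 ∨ 1 ≤ m
  · -- derivative is positive: contradiction with maximality
    have hDpos := hposD hcase
    set g : ℝ → ℝ := fun ε : ℝ => F (Function.update
      (Function.update x m0 (x m0 - ε)) m1 (x m1 + ε)) with hgdef
    have hg0 : g 0 = F x := by
      simp [hgdef, Function.update_eq_self]
    have htends := hasDerivAt_iff_tendsto_slope.mp hder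
    have hev : ∀ᶠ ε in 𝓝[≠] (0:ℝ), 0 < slope g 0 ε := by
      have := htends (Ioi_mem_nhds hDpos)
      exact this
    have hmono : 𝓝[>] (0:ℝ) ≤ 𝓝[≠] (0:ℝ) :=
      nhdsWithin_mono 0 (fun y hy => ne_of_gt hy)
    have hr : 0 < (x m0 - x m1) / 2 := by
      have := hdrop; linarith
    have hIoo : ∀ᶠ ε in 𝓝[>] (0:ℝ), ε ∈ Set.Ioo (0:ℝ) ((x m0 - x m1) / 2) :=
      Ioo_mem_nhdsGT_of_mem ⟨le_refl 0, hr⟩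
    obtain ⟨ε, hslope, hε0, hεr⟩ := ((hev.filter_mono hmono).and hIoo).exists
    have hgpos : g 0 < g ε := by
      rw [slope_def_field] at hslope
      have h7 : (0:ℝ) < ε - 0 := by linarith
      have h6 := mul_pos hslope h7
      rw [div_mul_cancel₀ _ (ne_of_gt h7)] at h6
      linarith
    set y : Fin k → ℝ := Function.update (Function.update x m0 (x m0 - ε)) m1 (x m1 + ε)
      with hydef
    have hyapp : ∀ i : Fin k,
        y i = if i = m1 then x m1 + ε else if i = m0 then x m0 - ε else x i :=
      fun i => upd_apply x m0 m1 hnem ε i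
    have hd : x m1 < x m0 := hdrop
    have hy_pos : ∀ i, 0 ≤ y i := by
      intro i
      rw [hyapp i]
      split_ifs with h1 h2
      · have := hpos m1; linarith
      · linarith [hpos m1]
      · exact hpos i
    have hy_anti : Antitone y := by
      intro i j hij
      have hvij : (i : ℕ) ≤ (j : ℕ) := hij
      rw [hyapp i, hyapp j]
      rcases eq_or_ne j m1 with rfl | hj1
      · rcases eq_or_ne i m1 with rfl | hi1
        · simp
        · have hi1v : (i : ℕ) ≠ m + 1 := fun hc => hi1 (Fin.ext hc)
          rcases eq_or_ne i m0 with rfl | hi0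
          · rw [if_pos rfl, if_neg hi1, if_pos rfl]
            linarith
          · have hi0v : (i : ℕ) ≠ m := fun hc => hi0 (Fin.ext hc)
            have hile : i ≤ m0 := Fin.le_def.mpr (by rw [hm0v]; omega)
            have := hsort hile
            rw [if_pos rfl, if_neg hi1, if_neg hi0]
            linarith
      · have hj1v : (j : ℕ) ≠ m + 1 := fun hc => hj1 (Fin.ext hc)
        rcases eq_or_ne j m0 with rfl | hj0
        · rcases eq_or_ne i m1 with rfl | hi1
          · exfalso; rw [hm1v] at hvij; rw [hm0v] at hvij; omega
          · rcases eq_or_ne i m0 with rfl | hi0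
            · rw [if_neg hj1, if_pos rfl]
            · have hi0v : (i : ℕ) ≠ m := fun hc => hi0 (Fin.ext hc)
              have hile : i ≤ m0 := Fin.le_def.mpr (by rw [hm0v]; omega)
              have := hsort hile
              rw [if_neg hj1, if_pos rfl, if_neg hi1, if_neg hi0]
              linarith
        · have hj0v : (j : ℕ) ≠ m := fun hc => hj0 (Fin.ext hc)
          rcases eq_or_ne i m1 with rfl | hi1
          · have hjge : m1 ≤ j := Fin.le_def.mpr (by rw [hm1v]; rw [hm1v] at hvij; omega)
            have := hsort hjge
            rw [if_neg hj1, if_neg hj0, if_pos rfl]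
            linarith
          · rcases eq_or_ne i m0 with rfl | hi0
            · have hjge : m1 ≤ j := Fin.le_def.mpr (by rw [hm1v]; rw [hm0v] at hvij; omega)
              have := hsort hjge
              rw [if_neg hj1, if_neg hj0, if_neg hi1, if_pos rfl]
              linarith
            · rw [if_neg hj1, if_neg hj0, if_neg hi1, if_neg hi0]
              exact hsort hij
    have hy_sum : (∑ i, y i) ≤ 1 := by
      have hpt : ∀ i : Fin k, y i = x i + (if i = m1 then ε else if i = m0 then -ε else 0) := by
        intro i
        rw [hyapp i]
        rcases eq_or_ne i m1 with rfl | h1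
        · simp
        · rcases eq_or_ne i m0 with rfl | h2
          · rw [if_neg h1, if_pos rfl, if_neg h1, if_pos rfl]; ring
          · rw [if_neg h1, if_neg h2, if_neg h1, if_neg h2]; ring
      rw [Finset.sum_congr rfl (fun i _ => hpt i), Finset.sum_add_distrib,
        sum_ite_two m0 m1 hnem ε (-ε)]
      simpa using hsum
    have hy_half : y ⟨0, by omega⟩ ≤ 1 / 2 := by
      rw [hyapp _]
      split_ifs with h1 h2
      · exfalso
        have := congrArg Fin.val h1
        simp [hm1v] at this
      · have : x m0 = x ⟨0, by omega⟩ := by rw [← h2]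
        rw [this]
        linarith
      · exact hhalf
    have hle := hmax y hy_anti hy_pos hy_sum hy_half
    have : g ε = F y := rfl
    rw [this, hg0] at hgpos
    linarith
  · -- m = 0 and x m1 = 0
    push_neg at hcase
    obtain ⟨hb0', hm0'⟩ := hcase
    have hb0 : x m1 = 0 := le_antisymm hb0' (hpos m1)
    have hmz : m = 0 := by omega
    have hm0eq : m0 = (⟨0, by omega⟩ : Fin k) := Fin.ext (by simp [hm0v, hmz])
    have hA_pos : 0 < x ⟨0, by omega⟩ := by
      rw [← hm0eq]; rw [hb0] at hdrop; exact hdrop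
    have hj0 : ∀ j : Fin k, j ≠ ⟨0, by omega⟩ → x j = 0 := by
      intro j hj
      have hjv : (j : ℕ) ≠ 0 := fun hc => hj (Fin.ext hc)
      have hjge : m1 ≤ j := Fin.le_def.mpr (by rw [hm1v]; omega)
      have := hsort hjge
      have := hpos j
      rw [hb0] at *
      linarith [hsort hjge]
    set A := x ⟨0, by omega⟩ with hAdef
    set y : Fin k → ℝ := fun j => if (j : ℕ) ≤ 1 then A else 0 with hydef
    have hi01 : (⟨0, by omega⟩ : Fin k) ≠ (⟨1, by omega⟩ : Fin k) := by
      simp [Fin.ext_iff]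
    have hy_pos : ∀ i, 0 ≤ y i := by
      intro i; rw [hydef]; dsimp only; split_ifs
      · exact le_of_lt hA_pos
      · exact le_rfl
    have hy_anti : Antitone y := by
      intro i j hij
      have hvij : (i : ℕ) ≤ (j : ℕ) := hij
      rw [hydef]; dsimp only
      split_ifs with h1 h2 h2
      · exact le_rfl
      · omega
      · exact le_of_lt hA_pos
      · exact le_rfl
    have hyval0 : y ⟨0, by omega⟩ = A := by rw [hydef]; dsimp only; rw [if_pos (by norm_num)]
    have hyval1 : y ⟨1, by omega⟩ = A := by rw [hydef]; dsimp only; rw [if_pos (by norm_num)]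
    have hyval : ∀ j : Fin k, 2 ≤ (j : ℕ) → y j = 0 := by
      intro j hj; rw [hydef]; dsimp only; rw [if_neg (by omega)]
    have hysum : (∑ i, y i) = 2 * A := by
      rw [← Finset.sum_subset (Finset.subset_univ {(⟨0, by omega⟩ : Fin k), ⟨1, by omega⟩})]
      · rw [Finset.sum_pair hi01, hyval0, hyval1]; ring
      · intro i _ hi
        simp only [Finset.mem_insert, Finset.mem_singleton] at hi
        push_neg at hi
        obtain ⟨h1, h2⟩ := hi
        have h1v : (i : ℕ) ≠ 0 := fun hc => h1 (Fin.ext hc)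
        have h2v : (i : ℕ) ≠ 1 := fun hc => h2 (Fin.ext hc)
        rw [hydef]; dsimp only; rw [if_neg (by omega)]
    have hy_sum : (∑ i, y i) ≤ 1 := by rw [hysum]; linarith
    have hy_half : y ⟨0, by omega⟩ ≤ 1 / 2 := by
      rw [hydef]; dsimp only; rw [if_pos (by norm_num)]; exact hhalf
    have hFx : F x = A ^ 2 / 2 - A ^ 3 / 2 := by
      rw [F]
      have t1 : (∑ i : Fin k, (x i ^ 2 / 2 - x i ^ 3 / 2)) = A ^ 2 / 2 - A ^ 3 / 2 := by
        apply Finset.sum_eq_single_of_mem (⟨0, by omega⟩ : Fin k) (Finset.mem_univ _)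
        intro b _ hb
        rw [hj0 b hb]; norm_num
      have t2 : (∑ i : Fin k, ∑ j ∈ Finset.Ioi i,
          (x i * x j + x i * x j ^ 2 / 2 - 3 * x i ^ 2 * x j / 2 - 2 * x j ^ 3 / 3)) = 0 := by
        apply Finset.sum_eq_zero; intro i _
        apply Finset.sum_eq_zero; intro j hj
        have hij := Finset.mem_Ioi.mp hj
        have hjne : j ≠ ⟨0, by omega⟩ := by
          intro hc
          rw [hc] at hij
          exact absurd (Fin.lt_def.mp hij) (by omega)
        rw [hj0 j hjne]; ring
      rw [t1, t2]; ring
    have hFy : F y = 2 * (A ^ 2 / 2 - A ^ 3 / 2)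
        + (A * A + A * A ^ 2 / 2 - 3 * A ^ 2 * A / 2 - 2 * A ^ 3 / 3) := by
      rw [F]
      have t1 : (∑ i : Fin k, (y i ^ 2 / 2 - y i ^ 3 / 2)) = 2 * (A ^ 2 / 2 - A ^ 3 / 2) := by
        rw [← Finset.sum_subset (Finset.subset_univ {(⟨0, by omega⟩ : Fin k), ⟨1, by omega⟩})]
        · rw [Finset.sum_pair hi01, hyval0, hyval1]; ring
        · intro i _ hi
          simp only [Finset.mem_insert, Finset.mem_singleton] at hi
          push_neg at hi
          obtain ⟨h1, h2⟩ := hi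
          have h1v : (i : ℕ) ≠ 0 := fun hc => h1 (Fin.ext hc)
          have h2v : (i : ℕ) ≠ 1 := fun hc => h2 (Fin.ext hc)
          rw [hyval i (by omega)]; norm_num
      have t2 : (∑ i : Fin k, ∑ j ∈ Finset.Ioi i,
          (y i * y j + y i * y j ^ 2 / 2 - 3 * y i ^ 2 * y j / 2 - 2 * y j ^ 3 / 3))
          = A * A + A * A ^ 2 / 2 - 3 * A ^ 2 * A / 2 - 2 * A ^ 3 / 3 := by
        rw [Finset.sum_eq_single_of_mem (⟨0, by omega⟩ : Fin k) (Finset.mem_univ _)]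
        · rw [Finset.sum_eq_single_of_mem (⟨1, by omega⟩ : Fin k)]
          · rw [hyval0, hyval1]
          · exact Finset.mem_Ioi.mpr (Fin.lt_def.mpr (by norm_num))
          · intro j hj hj1
            have hij := Fin.lt_def.mp (Finset.mem_Ioi.mp hj)
            have hj1v : (j : ℕ) ≠ 1 := fun hc => hj1 (Fin.ext hc)
            rw [hyval j (by simp at hij; omega)]; ring
        · intro i _ hi0
          apply Finset.sum_eq_zero
          intro j hj
          have hij := Fin.lt_def.mp (Finset.mem_Ioi.mp hj)
          have hi0v : (i : ℕ) ≠ 0 := fun hc => hi0 (Fin.ext hc)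
          rw [hyval j (by omega)]; ring
      rw [t1, t2]
    have hle := hmax y hy_anti hy_pos hy_sum hy_half
    rw [hFy, hFx] at hle
    have hA2 : A ≤ 1 / 2 := hhalf
    nlinarith
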